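/- Let N ≥ 21 be an integer, set n = 2N² and p = 2/N, and let Y be any random n×n matrix with entries in {0,1} that is p-robust. Then the probability that Y has no perfect matching (no permutation σ of {1,…,n} with the (σ(j),j) entry equal to 1 for all j) is at most e^{−N}. -/

import Mathlib

open MeasureTheory Finset

/-- **Failure probability of Algorithm 1's matrix**: let `N ≥ 21`, set `n = 2N²` and
`p = 2/N`, and let `μ` be the joint law of a random `n×n` 0–1 matrix (encoded as
`ω : Fin n → Fin n → Bool`) which is `p`-robust: every entry equals `1` with
(conditional) probability at least `p`, given any positive-probability assignment of
values to any collection of entries preceding it in row-major order (and in particular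
unconditionally, taking the empty collection).  Then the probability that the matrix
has no perfect matching is at most `e^{−N}`. -/
lemma zero_pattern_bound {n : ℕ} (μ : Measure (Fin n → Fin n → Bool)) [IsProbabilityMeasure μ]
    (p : ℝ) (hp0 : 0 ≤ p) (hp1 : p ≤ 1)
    (hrob : ∀ (i j : Fin n) (T : Finset (Fin n × Fin n)),
      (∀ q ∈ T, q.1 < i ∨ (q.1 = i ∧ q.2 < j)) →
      ∀ a : Fin n × Fin n → Bool,
        μ {ω | ∀ q ∈ T, ω q.1 q.2 = a q} ≠ 0 →
        ENNReal.ofReal p * μ {ω | ∀ q ∈ T, ω q.1 q.2 = a q} ≤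
          μ ({ω | ω i j = true} ∩ {ω | ∀ q ∈ T, ω q.1 q.2 = a q})) :
    ∀ T : Finset (Fin n × Fin n),
      μ {ω | ∀ q ∈ T, ω q.1 q.2 = false} ≤ ENNReal.ofReal ((1 - p) ^ T.card) := by
  intro T
  induction T using Finset.strongInduction with
  | _ T ih =>
    rcases T.eq_empty_or_nonempty with rfl | hne
    · simp
    obtain ⟨q₀, hq₀T, hmax⟩ := T.exists_max_image (fun q => (q.1 : ℕ) * n + (q.2 : ℕ)) hne
    set T' := T.erase q₀ with hT'def
    have hT'sub : T' ⊂ T := Finset.erase_ssubset hq₀T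
    have hprec : ∀ q ∈ T', q.1 < q₀.1 ∨ (q.1 = q₀.1 ∧ q.2 < q₀.2) := by
      intro q hq
      have hqT : q ∈ T := Finset.mem_of_mem_erase hq
      have hqne : q ≠ q₀ := Finset.ne_of_mem_erase hq
      have hle : (q.1 : ℕ) * n + (q.2 : ℕ) ≤ (q₀.1 : ℕ) * n + (q₀.2 : ℕ) := hmax q hqT
      rcases lt_trichotomy (q.1 : ℕ) (q₀.1 : ℕ) with h | h | h
      · exact Or.inl h
      · right
        refine ⟨Fin.ext h, ?_⟩
        rw [h] at hle
        have hj : (q.2 : ℕ) ≤ (q₀.2 : ℕ) := by omega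
        have hjne : (q.2 : ℕ) ≠ (q₀.2 : ℕ) := fun hjj => hqne (Prod.ext (Fin.ext h) (Fin.ext hjj))
        have hlt : (q.2 : ℕ) < (q₀.2 : ℕ) := lt_of_le_of_ne hj hjne
        exact hlt
      · exfalso
        have h1 : ((q₀.1 : ℕ) + 1) * n ≤ (q.1 : ℕ) * n := Nat.mul_le_mul_right n h
        have h2 : (q₀.2 : ℕ) < n := q₀.2.isLt
        nlinarith [hle]
    set E := {ω : Fin n → Fin n → Bool | ∀ q ∈ T', ω q.1 q.2 = false} with hEdef
    set F := {ω : Fin n → Fin n → Bool | ∀ q ∈ T, ω q.1 q.2 = false} with hFdef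
    have hFsub : F ⊆ E := fun ω hω q hq => hω q (Finset.mem_of_mem_erase hq)
    have hcard : T.card = T'.card + 1 := by
      have h1 : 1 ≤ T.card := Finset.card_pos.mpr hne
      rw [hT'def, Finset.card_erase_of_mem hq₀T]
      omega
    have hEbound := ih T' hT'sub
    by_cases hE0 : μ E = 0
    · calc μ F ≤ μ E := measure_mono hFsub
        _ = 0 := hE0
        _ ≤ _ := zero_le
    · have hrob' := hrob q₀.1 q₀.2 T' hprec (fun _ => false) hE0
      -- split E
      have hFeq : F = {ω : Fin n → Fin n → Bool | ω q₀.1 q₀.2 = false} ∩ E := by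
        ext ω
        simp only [hFdef, hEdef, Set.mem_inter_iff, Set.mem_setOf_eq, hT'def]
        constructor
        · intro h; exact ⟨h q₀ hq₀T, fun q hq => h q (Finset.mem_of_mem_erase hq)⟩
        · rintro ⟨h0, h⟩ q hq
          rcases eq_or_ne q q₀ with rfl | hne'
          · exact h0
          · exact h q (Finset.mem_erase.mpr ⟨hne', hq⟩)
      have hsplit : μ ({ω : Fin n → Fin n → Bool | ω q₀.1 q₀.2 = true} ∩ E)
          + μ ({ω : Fin n → Fin n → Bool | ω q₀.1 q₀.2 = false} ∩ E) = μ E := by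
        rw [← measure_union ?hd ((Set.toFinite _).measurableSet)]
        · congr 1
          ext ω
          simp only [Set.mem_union, Set.mem_inter_iff, Set.mem_setOf_eq]
          cases h : ω q₀.1 q₀.2 <;> tauto
        case hd =>
          refine Set.disjoint_left.mpr ?_
          rintro ω ⟨h1, -⟩ ⟨h2, -⟩
          simp only [Set.mem_setOf_eq] at h1 h2
          simp [h1] at h2
      have hμE_ne_top : μ E ≠ ⊤ := measure_ne_top μ E
      have key : μ F ≤ ENNReal.ofReal (1 - p) * μ E := by
        have h1 : ENNReal.ofReal p * μ E ≤ μ ({ω : Fin n → Fin n → Bool | ω q₀.1 q₀.2 = true} ∩ E) := hrob'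
        have hsum : ENNReal.ofReal (1 - p) * μ E + ENNReal.ofReal p * μ E = μ E := by
          rw [← add_mul, ← ENNReal.ofReal_add (by linarith) hp0]
          norm_num
        have : μ F + ENNReal.ofReal p * μ E ≤
            ENNReal.ofReal (1 - p) * μ E + ENNReal.ofReal p * μ E := by
          rw [hsum, hFeq]
          calc μ ({ω : Fin n → Fin n → Bool | ω q₀.1 q₀.2 = false} ∩ E) + ENNReal.ofReal p * μ E
              ≤ μ ({ω : Fin n → Fin n → Bool | ω q₀.1 q₀.2 = false} ∩ E)
                + μ ({ω : Fin n → Fin n → Bool | ω q₀.1 q₀.2 = true} ∩ E) := by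
                exact add_le_add_right h1 _
            _ = μ E := by rw [add_comm]; exact hsplit
        have hne_top : ENNReal.ofReal p * μ E ≠ ⊤ :=
          ENNReal.mul_ne_top ENNReal.ofReal_ne_top hμE_ne_top
        exact (ENNReal.add_le_add_iff_right hne_top).mp this
      calc μ F ≤ ENNReal.ofReal (1 - p) * μ E := key
        _ ≤ ENNReal.ofReal (1 - p) * ENNReal.ofReal ((1 - p) ^ T'.card) := by
            exact mul_le_mul_right hEbound _
        _ = ENNReal.ofReal ((1 - p) ^ T.card) := by
            rw [← ENNReal.ofReal_mul (by linarith), hcard, pow_succ]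
            ring_nf

lemma no_pm_exists_zero_block {n : ℕ} (ω : Fin n → Fin n → Bool)
    (h : ¬ ∃ σ : Equiv.Perm (Fin n), ∀ j, ω (σ j) j = true) :
    ∃ S R : Finset (Fin n), 1 ≤ S.card ∧ S.card ≤ n ∧ R.card = n + 1 - S.card ∧
      ∀ r ∈ R, ∀ c ∈ S, ω r c = false := by
  classical
  set t : Fin n → Finset (Fin n) := fun j => univ.filter (fun i => ω i j = true) with ht
  have hhall : ¬ ∀ s : Finset (Fin n), s.card ≤ (s.biUnion t).card := by
    intro hall
    obtain ⟨f, hfinj, hf⟩ := (Finset.all_card_le_biUnion_card_iff_exists_injective t).mp hall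
    have hbij := Finite.injective_iff_bijective.mp hfinj
    refine h ⟨Equiv.ofBijective f hbij, fun j => ?_⟩
    have := hf j
    rw [ht] at this
    simp only [mem_filter] at this
    simpa [Equiv.ofBijective_apply] using this.2
  push_neg at hhall
  obtain ⟨S, hS⟩ := hhall
  have hS1 : 1 ≤ S.card := by
    by_contra hc
    push_neg at hc
    interval_cases h : S.card <;> omega
  have hSn : S.card ≤ n := by
    simpa using Finset.card_le_card (Finset.subset_univ S)
  have hBcard : (S.biUnion t).card < S.card := hS
  have hR0 : ((S.biUnion t)ᶜ : Finset (Fin n)).card = n - (S.biUnion t).card := by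
    rw [Finset.card_compl]
    simp
  have hR0ge : n + 1 - S.card ≤ ((S.biUnion t)ᶜ : Finset (Fin n)).card := by
    have hB : (S.biUnion t).card ≤ n := by
      simpa using Finset.card_le_card (Finset.subset_univ (S.biUnion t))
    omega
  have hex : ∃ R ⊆ ((S.biUnion t)ᶜ : Finset (Fin n)), R.card = n + 1 - S.card :=
    Finset.exists_subset_card_eq hR0ge
  obtain ⟨R, hRsub, hRcard⟩ := hex
  refine ⟨S, R, hS1, hSn, hRcard, fun r hr c hc => ?_⟩
  have hrc : r ∉ S.biUnion t := by
    have := hRsub hr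
    simpa [Finset.mem_compl] using this
  have : r ∉ t c := fun hmem => hrc (Finset.mem_biUnion.mpr ⟨c, hc, hmem⟩)
  rw [ht] at this
  simp only [mem_filter, mem_univ, true_and] at this
  simpa using this

lemma choose_bound (n a b : ℕ) (h1 : 1 ≤ a) (h2 : a ≤ n) (hb : b = n + 1 - a) :
    n.choose a * n.choose b ≤ n ^ (2 * min a b - 1) := by
  have hb1 : 1 ≤ b := by omega
  have hbn : b ≤ n := by omega
  rcases le_total a b with hab | hab
  · have hm : min a b = a := min_eq_left hab
    have hc1 : n.choose a ≤ n ^ a := Nat.choose_le_pow n a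
    have hc2 : n.choose b ≤ n ^ (a - 1) := by
      have hd : n - b = a - 1 := by omega
      calc n.choose b = n.choose (n - b) := (Nat.choose_symm hbn).symm
        _ = n.choose (a - 1) := by rw [hd]
        _ ≤ n ^ (a - 1) := Nat.choose_le_pow n _
    calc n.choose a * n.choose b ≤ n ^ a * n ^ (a - 1) := Nat.mul_le_mul hc1 hc2
      _ = n ^ (a + (a - 1)) := (pow_add n a (a-1)).symm
      _ = n ^ (2 * min a b - 1) := by rw [hm]; congr 1; omega
  · have hm : min a b = b := min_eq_right hab
    have hc1 : n.choose b ≤ n ^ b := Nat.choose_le_pow n b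
    have hc2 : n.choose a ≤ n ^ (b - 1) := by
      have hd : n - a = b - 1 := by omega
      calc n.choose a = n.choose (n - a) := (Nat.choose_symm h2).symm
        _ = n.choose (b - 1) := by rw [hd]
        _ ≤ n ^ (b - 1) := Nat.choose_le_pow n _
    calc n.choose a * n.choose b ≤ n ^ (b - 1) * n ^ b := Nat.mul_le_mul hc2 hc1
      _ = n ^ ((b - 1) + b) := (pow_add n (b-1) b).symm
      _ = n ^ (2 * min a b - 1) := by rw [hm]; congr 1; omega

lemma four_pow_le_exp (N : ℕ) (hN : 21 ≤ N) : 4 * (N : ℝ) ^ 4 ≤ Real.exp N := by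
  have hN' : (21 : ℝ) ≤ (N : ℝ) := by exact_mod_cast hN
  have hN0 : (0 : ℝ) ≤ (N : ℝ) := by positivity
  have h9 : (N : ℝ) ^ 9 / 362880 ≤ Real.exp N := by
    have hsum := Real.sum_le_exp_of_nonneg hN0 10
    have hterm := Finset.single_le_sum (f := fun i => (N : ℝ) ^ i / (Nat.factorial i : ℝ))
      (fun i _ => by positivity) (Finset.mem_range.mpr (by norm_num : (9:ℕ) < 10))
    simp only [Nat.factorial] at hterm
    norm_num at hterm
    linarith
  have h5 : (21 : ℝ) ^ 5 ≤ (N : ℝ) ^ 5 := pow_le_pow_left₀ (by norm_num) hN' 5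
  have h4 : (0 : ℝ) ≤ (N : ℝ) ^ 4 := by positivity
  nlinarith [mul_le_mul_of_nonneg_left h5 h4]

lemma real_sum_bound (N : ℕ) (hN : 21 ≤ N) :
    ∑ P ∈ (univ.filter (fun P : Finset (Fin (2*N^2)) × Finset (Fin (2*N^2)) =>
        1 ≤ P.1.card ∧ P.1.card ≤ 2*N^2 ∧ P.2.card = 2*N^2+1-P.1.card)),
      (1 - 2/(N:ℝ)) ^ (P.2.card * P.1.card) ≤ Real.exp (-(N:ℝ)) := by
  classical
  have hNpos : (0:ℝ) < N := by
    have : (21:ℝ) ≤ N := by exact_mod_cast hN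
    linarith
  have hNne : (N:ℝ) ≠ 0 := ne_of_gt hNpos
  set n : ℕ := 2 * N ^ 2 with hn
  have hnpos : 0 < n := by positivity
  have hnR : (0:ℝ) < (n:ℝ) := by exact_mod_cast hnpos
  set p : ℝ := 2 / (N:ℝ) with hp
  have hp0 : 0 ≤ p := by positivity
  have hp1 : p ≤ 1 := by
    rw [hp, div_le_one hNpos]
    have : (21:ℝ) ≤ N := by exact_mod_cast hN
    linarith
  have h1p0 : 0 ≤ 1 - p := by linarith
  have h1p1 : 1 - p ≤ 1 := by linarith
  set c : ℝ := Real.exp (-(2 * (N:ℝ))) with hc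
  have hc0 : 0 ≤ c := le_of_lt (Real.exp_pos _)
  -- base estimate
  have hbase : (1 - p) ^ (N ^ 2) ≤ c := by
    have h1 : 1 - p ≤ Real.exp (-p) := by
      have := Real.add_one_le_exp (-p)
      linarith
    calc (1 - p) ^ (N ^ 2) ≤ (Real.exp (-p)) ^ (N ^ 2) :=
          pow_le_pow_left₀ h1p0 h1 _
      _ = Real.exp ((N ^ 2 : ℕ) * (-p)) := (Real.exp_nat_mul _ _).symm
      _ = c := by
          rw [hc]
          congr 1
          have hx : ((N:ℝ)^2) * p = 2 * (N:ℝ) := by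
            rw [hp]; field_simp
          push_cast
          linear_combination -hx
  -- the constant y
  set y : ℝ := (n:ℝ) ^ 2 * c with hy
  have hy0 : 0 ≤ y := by positivity
  have hyle : y ≤ Real.exp (-(N:ℝ)) := by
    have h4 := four_pow_le_exp N hN
    have hn4 : (n:ℝ) ^ 2 = 4 * (N:ℝ) ^ 4 := by
      rw [hn]; push_cast; ring
    calc y = (n:ℝ)^2 * c := rfl
      _ = 4 * (N:ℝ)^4 * c := by rw [hn4]
      _ ≤ Real.exp (N:ℝ) * c := by
          exact mul_le_mul_of_nonneg_right h4 hc0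
      _ = Real.exp (-(N:ℝ)) := by
          rw [hc, ← Real.exp_add]; ring_nf
  have hy1 : y ≤ 1 := le_trans hyle (Real.exp_le_one_iff.mpr (by linarith))
  -- per term bound
  have hterm : ∀ P ∈ (univ.filter (fun P : Finset (Fin n) × Finset (Fin n) =>
        1 ≤ P.1.card ∧ P.1.card ≤ n ∧ P.2.card = n+1-P.1.card)),
      (1 - p) ^ (P.2.card * P.1.card) ≤ c ^ (min P.1.card P.2.card) := by
    intro P hP
    simp only [mem_filter, mem_univ, true_and] at hP
    obtain ⟨ha1, han, hbcard⟩ := hP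
    set a := P.1.card
    set b := P.2.card
    have hmn : min a b * N ^ 2 ≤ b * a := by
      rcases le_total a b with hab | hab
      · have hm : min a b = a := min_eq_left hab
        have hKb : N ^ 2 ≤ b := by
          rw [hbcard] at hab ⊢
          omega
        rw [hm]
        calc a * N ^ 2 ≤ a * b := Nat.mul_le_mul_left a hKb
          _ = b * a := Nat.mul_comm a b
      · have hm : min a b = b := min_eq_right hab
        have hKa : N ^ 2 ≤ a := by
          rw [hbcard] at hab
          omega
        rw [hm]
        exact Nat.mul_le_mul_left b hKa
    calc (1 - p) ^ (b * a) ≤ (1 - p) ^ (min a b * N ^ 2) :=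
          pow_le_pow_of_le_one h1p0 h1p1 hmn
      _ = ((1 - p) ^ (N ^ 2)) ^ (min a b) := by rw [← pow_mul, Nat.mul_comm]
      _ ≤ c ^ (min a b) := pow_le_pow_left₀ (by positivity) hbase _
  -- sum
  calc ∑ P ∈ (univ.filter (fun P : Finset (Fin n) × Finset (Fin n) =>
        1 ≤ P.1.card ∧ P.1.card ≤ n ∧ P.2.card = n+1-P.1.card)),
      (1 - p) ^ (P.2.card * P.1.card)
      ≤ ∑ P ∈ (univ.filter (fun P : Finset (Fin n) × Finset (Fin n) =>
        1 ≤ P.1.card ∧ P.1.card ≤ n ∧ P.2.card = n+1-P.1.card)),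
          c ^ (min P.1.card P.2.card) := Finset.sum_le_sum hterm
    _ = ∑ a ∈ Finset.Icc 1 n, ∑ P ∈ (univ.filter (fun P : Finset (Fin n) × Finset (Fin n) =>
        1 ≤ P.1.card ∧ P.1.card ≤ n ∧ P.2.card = n+1-P.1.card)).filter
          (fun P => P.1.card = a), c ^ (min P.1.card P.2.card) := by
        refine (Finset.sum_fiberwise_of_maps_to ?_ _).symm
        intro P hP
        simp only [mem_filter, mem_univ, true_and] at hP
        exact Finset.mem_Icc.mpr ⟨hP.1, hP.2.1⟩
    _ ≤ ∑ a ∈ Finset.Icc 1 n, Real.exp (-(N:ℝ)) / n := by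
        refine Finset.sum_le_sum ?_
        intro a ha
        rw [Finset.mem_Icc] at ha
        obtain ⟨ha1, han⟩ := ha
        set b := n + 1 - a with hbdef
        set m := min a b with hm
        have hm1 : 1 ≤ m := by
          rw [hm]; omega
        -- constant on the fiber
        have hconst : ∀ P ∈ (univ.filter (fun P : Finset (Fin n) × Finset (Fin n) =>
            1 ≤ P.1.card ∧ P.1.card ≤ n ∧ P.2.card = n+1-P.1.card)).filter
            (fun P => P.1.card = a), c ^ (min P.1.card P.2.card) ≤ c ^ m := by
          intro P hP
          simp only [mem_filter, mem_univ, true_and] at hP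
          obtain ⟨⟨-, -, hPb⟩, hPa⟩ := hP
          rw [hPa] at hPb ⊢
          rw [hPb]
        have hfib := Finset.sum_le_card_nsmul _ _ _ hconst
        -- cardinality of the fiber
        have hsubfib : (univ.filter (fun P : Finset (Fin n) × Finset (Fin n) =>
            1 ≤ P.1.card ∧ P.1.card ≤ n ∧ P.2.card = n+1-P.1.card)).filter
            (fun P => P.1.card = a) ⊆
            (Finset.powersetCard a (univ : Finset (Fin n))) ×ˢ
            (Finset.powersetCard b (univ : Finset (Fin n))) := by
          intro P hP
          simp only [mem_filter, mem_univ, true_and] at hP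
          obtain ⟨⟨-, -, hPb⟩, hPa⟩ := hP
          rw [Finset.mem_product, Finset.mem_powersetCard, Finset.mem_powersetCard]
          exact ⟨⟨Finset.subset_univ _, hPa⟩, Finset.subset_univ _, by rw [hPb, hPa]⟩
        have hcardfib : ((univ.filter (fun P : Finset (Fin n) × Finset (Fin n) =>
            1 ≤ P.1.card ∧ P.1.card ≤ n ∧ P.2.card = n+1-P.1.card)).filter
            (fun P => P.1.card = a)).card ≤ n.choose a * n.choose b := by
          calc _ ≤ ((Finset.powersetCard a (univ : Finset (Fin n))) ×ˢ
              (Finset.powersetCard b (univ : Finset (Fin n)))).card :=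
                Finset.card_le_card hsubfib
            _ = n.choose a * n.choose b := by
                rw [Finset.card_product, Finset.card_powersetCard, Finset.card_powersetCard]
                simp
        have hchoose : n.choose a * n.choose b ≤ n ^ (2 * m - 1) :=
          choose_bound n a b ha1 han hbdef
        -- combine
        have hpow : ((n:ℝ) ^ (2 * m - 1)) * c ^ m ≤ Real.exp (-(N:ℝ)) / n := by
          have hysplit : y ^ m = (n:ℝ) ^ (2 * m - 1) * c ^ m * n := by
            have hpow2 : (n:ℝ) ^ (2 * m - 1) * (n:ℝ) = (n:ℝ) ^ (2 * m) := by
              rw [← pow_succ]; congr 1; omega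
            rw [hy, mul_pow, ← pow_mul, ← hpow2]; ring
          have hym : y ^ m ≤ y := by
            calc y ^ m ≤ y ^ 1 := pow_le_pow_of_le_one hy0 hy1 hm1
              _ = y := pow_one y
          rw [le_div_iff₀ hnR]
          calc (n:ℝ) ^ (2*m-1) * c ^ m * n = y ^ m := hysplit.symm
            _ ≤ y := hym
            _ ≤ Real.exp (-(N:ℝ)) := hyle
        refine le_trans hfib ?_
        rw [nsmul_eq_mul]
        calc (((univ.filter (fun P : Finset (Fin n) × Finset (Fin n) =>
              1 ≤ P.1.card ∧ P.1.card ≤ n ∧ P.2.card = n+1-P.1.card)).filter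
              (fun P => P.1.card = a)).card : ℝ) * c ^ m
            ≤ ((n.choose a * n.choose b : ℕ) : ℝ) * c ^ m := by
              refine mul_le_mul_of_nonneg_right ?_ (by positivity)
              exact_mod_cast hcardfib
          _ ≤ ((n ^ (2 * m - 1) : ℕ) : ℝ) * c ^ m := by
              refine mul_le_mul_of_nonneg_right ?_ (by positivity)
              exact_mod_cast hchoose
          _ = ((n:ℝ) ^ (2 * m - 1)) * c ^ m := by push_cast; ring
          _ ≤ Real.exp (-(N:ℝ)) / n := hpow
    _ = Real.exp (-(N:ℝ)) := by
        have hnne : (n:ℝ) ≠ 0 := ne_of_gt hnR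
        rw [Finset.sum_const, Nat.card_Icc, nsmul_eq_mul]
        have h11 : (n + 1 - 1 : ℕ) = n := by omega
        rw [h11]
        field_simp

theorem probust_matrix_no_pm_le_exp (N : ℕ) (hN : 21 ≤ N)
    (μ : Measure (Fin (2 * N ^ 2) → Fin (2 * N ^ 2) → Bool)) [IsProbabilityMeasure μ]
    -- `μ` is `p`-robust with `p = 2/N` (row-major precedence)
    (hrob : ∀ (i j : Fin (2 * N ^ 2)) (T : Finset (Fin (2 * N ^ 2) × Fin (2 * N ^ 2))),
      (∀ q ∈ T, q.1 < i ∨ (q.1 = i ∧ q.2 < j)) →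
      ∀ a : Fin (2 * N ^ 2) × Fin (2 * N ^ 2) → Bool,
        μ {ω | ∀ q ∈ T, ω q.1 q.2 = a q} ≠ 0 →
        ENNReal.ofReal (2 / (N : ℝ)) * μ {ω | ∀ q ∈ T, ω q.1 q.2 = a q} ≤
          μ ({ω | ω i j = true} ∩ {ω | ∀ q ∈ T, ω q.1 q.2 = a q})) :
    μ {ω | ¬ ∃ σ : Equiv.Perm (Fin (2 * N ^ 2)), ∀ j, ω (σ j) j = true} ≤
      ENNReal.ofReal (Real.exp (-(N : ℝ))) := by
  classical
  have hNpos : (0:ℝ) < N := by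
    have : (21:ℝ) ≤ N := by exact_mod_cast hN
    linarith
  have hp0 : (0:ℝ) ≤ 2 / (N:ℝ) := by positivity
  have hp1 : 2 / (N:ℝ) ≤ 1 := by
    rw [div_le_one hNpos]
    have : (21:ℝ) ≤ N := by exact_mod_cast hN
    linarith
  set 𝒜 : Finset (Finset (Fin (2*N^2)) × Finset (Fin (2*N^2))) :=
    univ.filter (fun P : Finset (Fin (2*N^2)) × Finset (Fin (2*N^2)) =>
      1 ≤ P.1.card ∧ P.1.card ≤ 2*N^2 ∧ P.2.card = 2*N^2+1-P.1.card) with h𝒜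
  set E : Finset (Fin (2*N^2)) × Finset (Fin (2*N^2)) → Set (Fin (2*N^2) → Fin (2*N^2) → Bool) :=
    fun P => {ω | ∀ q ∈ P.2 ×ˢ P.1, ω q.1 q.2 = false} with hE
  have hsub : {ω : Fin (2*N^2) → Fin (2*N^2) → Bool | ¬ ∃ σ : Equiv.Perm (Fin (2*N^2)), ∀ j, ω (σ j) j = true}
      ⊆ ⋃ P ∈ 𝒜, E P := by
    intro ω hω
    obtain ⟨S, R, hS1, hSn, hRcard, hzero⟩ := no_pm_exists_zero_block ω hω
    refine Set.mem_iUnion₂.mpr ⟨(S, R), ?_, ?_⟩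
    · rw [h𝒜]
      simp only [mem_filter, mem_univ, true_and]
      exact ⟨hS1, hSn, hRcard⟩
    · rw [hE]
      intro q hq
      rw [Finset.mem_product] at hq
      exact hzero q.1 hq.1 q.2 hq.2
  refine le_trans (measure_mono hsub) ?_
  calc μ (⋃ P ∈ 𝒜, E P)
      ≤ ∑ P ∈ 𝒜, μ (E P) := measure_biUnion_finset_le 𝒜 E
    _ ≤ ∑ P ∈ 𝒜, ENNReal.ofReal ((1 - 2/(N:ℝ)) ^ (P.2.card * P.1.card)) := by
        refine Finset.sum_le_sum ?_
        intro P hP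
        have := zero_pattern_bound μ (2/(N:ℝ)) hp0 hp1 hrob (P.2 ×ˢ P.1)
        rw [Finset.card_product] at this
        exact this
    _ = ENNReal.ofReal (∑ P ∈ 𝒜, (1 - 2/(N:ℝ)) ^ (P.2.card * P.1.card)) := by
        rw [ENNReal.ofReal_sum_of_nonneg]
        intro P hP
        have h1p0 : (0:ℝ) ≤ 1 - 2/(N:ℝ) := by linarith
        positivity
    _ ≤ ENNReal.ofReal (Real.exp (-(N:ℝ))) := by
        exact ENNReal.ofReal_le_ofReal (real_sum_bound N hN)
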